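/- For every natural number n and all real a and t, Q_n^{(a)}(t) equals the sum, over all Motzkin paths of length n, of the path weight determined by b_h = (2h+a)·t and λ_h = h·(h−1+a)·(1+t^2). (Equivalently, the ordinary generating function ∑_{n≥0} Q_n^{(a)}(t)·z^n has the Jacobi continued fraction expansion 𝔍((2h+a)t, h(h−1+a)(1+t^2)).) -/

import Mathlib

open Polynomial

/-- A step of a Motzkin path. -/
inductive MStep : Type
  | up : MStep
  | level : MStep
  | down : MStep
  deriving DecidableEq

instance instFintypeMStep : Fintype MStep :=
  ⟨{MStep.up, MStep.level, MStep.down}, fun x => by cases x <;> simp⟩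

/-- Whether a word of Motzkin steps, started at height `h`, stays nonnegative
(never steps down from height 0) and ends at height 0. -/
def isMotzkinFrom : List MStep → ℕ → Bool
  | [], h => h == 0
  | MStep.up :: rest, h => isMotzkinFrom rest (h + 1)
  | MStep.level :: rest, h => isMotzkinFrom rest h
  | MStep.down :: rest, h => h != 0 && isMotzkinFrom rest (h - 1)

/-- The weight of a Motzkin path started at height `h`: each up step has weight `1`,
each level step at height `h` has weight `b h`, and each down step from height `h`
to `h-1` has weight `lam h`. -/
def mweight {R : Type*} [CommRing R] (b : ℕ → R) (lam : ℕ → R) : List MStep → ℕ → R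
  | [], _ => 1
  | MStep.up :: rest, h => mweight b lam rest (h + 1)
  | MStep.level :: rest, h => b h * mweight b lam rest h
  | MStep.down :: rest, h => lam h * mweight b lam rest (h - 1)

/-- The derivative polynomials `Q_n^{(a)}`:
`Q_0^{(a)} = 1`, `Q_{n+1}^{(a)} = (1+t²)·(Q_n^{(a)})' + a·t·Q_n^{(a)}`. -/
noncomputable def polyQ (a : ℝ) : ℕ → Polynomial ℝ
  | 0 => 1
  | n + 1 => (1 + X ^ 2) * derivative (polyQ a n) + C a * X * polyQ a n

/-- path weight-or-zero -/
noncomputable def pwT (a t : ℝ) (w : List MStep) (h : ℕ) : ℝ :=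
  if isMotzkinFrom w h then
    mweight (fun k => (2 * (k : ℝ) + a) * t)
      (fun k => (k : ℝ) * ((k : ℝ) - 1 + a) * (1 + t ^ 2)) w h
  else 0

lemma pwT_nil (a t : ℝ) (h : ℕ) : pwT a t [] h = if h = 0 then 1 else 0 := by
  simp [pwT, isMotzkinFrom, mweight]

lemma pwT_up (a t : ℝ) (w : List MStep) (h : ℕ) :
    pwT a t (MStep.up :: w) h = pwT a t w (h + 1) := by
  rfl

lemma pwT_level (a t : ℝ) (w : List MStep) (h : ℕ) :
    pwT a t (MStep.level :: w) h = (2 * (h : ℝ) + a) * t * pwT a t w h := by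
  show (if isMotzkinFrom w h then (2 * (h : ℝ) + a) * t * mweight (fun k => (2 * (k : ℝ) + a) * t) (fun k => (k : ℝ) * ((k : ℝ) - 1 + a) * (1 + t ^ 2)) w h else 0) = _
  simp only [pwT]
  split <;> simp [*]

lemma pwT_down (a t : ℝ) (w : List MStep) (h : ℕ) :
    pwT a t (MStep.down :: w) h
      = (h : ℝ) * ((h : ℝ) - 1 + a) * (1 + t ^ 2) * pwT a t w (h - 1) := by
  cases h with
  | zero => simp [pwT, isMotzkinFrom]
  | succ k =>
    show (if isMotzkinFrom w k then ((k + 1 : ℕ) : ℝ) * (((k + 1 : ℕ) : ℝ) - 1 + a) * (1 + t ^ 2) * mweight (fun k => (2 * (k : ℝ) + a) * t) (fun k => (k : ℝ) * ((k : ℝ) - 1 + a) * (1 + t ^ 2)) w k else 0) = _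
    simp only [pwT, Nat.add_sub_cancel]
    split <;> simp [*]

noncomputable def wsum (a t : ℝ) (n h : ℕ) : ℝ :=
  ∑ f : Fin n → MStep, pwT a t (List.ofFn f) h

lemma msum (g : MStep → ℝ) : ∑ x, g x = g .up + g .level + g .down := by
  rw [show (Finset.univ : Finset MStep) = {MStep.up, MStep.level, MStep.down} from rfl]
  simp [Finset.sum_insert]; ring

lemma wsum_zero (a t : ℝ) (h : ℕ) : wsum a t 0 h = if h = 0 then 1 else 0 := by
  simp [wsum, List.ofFn_zero, pwT_nil]

lemma wsum_succ (a t : ℝ) (n h : ℕ) :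
    wsum a t (n + 1) h = wsum a t n (h + 1) + (2 * (h : ℝ) + a) * t * wsum a t n h
      + (h : ℝ) * ((h : ℝ) - 1 + a) * (1 + t ^ 2) * wsum a t n (h - 1) := by
  rw [wsum, ← Equiv.sum_comp (Fin.consEquiv (fun _ => MStep))
    (fun f => pwT a t (List.ofFn f) h)]
  rw [Fintype.sum_prod_type]
  rw [msum (fun x => ∑ g : Fin n → MStep, pwT a t (List.ofFn ((Fin.consEquiv fun _ => MStep) (x, g))) h)]
  have hofn : ∀ (x : MStep) (g : Fin n → MStep),
      List.ofFn (Fin.cons x g : Fin (n+1) → MStep) = x :: List.ofFn g := by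
    intro x g; simp [List.ofFn_succ]
  simp only [Fin.consEquiv, Equiv.coe_fn_mk, hofn, pwT_up, pwT_level, pwT_down, wsum,
    Finset.mul_sum]

lemma keyLeibniz (a : ℝ) (Q : Polynomial ℝ) (h : ℕ) :
    derivative^[h] ((1 + X ^ 2) * derivative Q + C a * X * Q) =
      (1 + X ^ 2) * derivative^[h + 1] Q
        + C (2 * (h : ℝ) + a) * X * derivative^[h] Q
        + C ((h : ℝ) * ((h : ℝ) - 1 + a)) * derivative^[h - 1] Q := by
  induction h with
  | zero => simp
  | succ k ih =>
    rw [Function.iterate_succ_apply', ih]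
    have e1 : derivative (derivative^[k + 1] Q) = derivative^[k + 2] Q :=
      (Function.iterate_succ_apply' _ _ _).symm
    have e2 : derivative (derivative^[k] Q) = derivative^[k + 1] Q :=
      (Function.iterate_succ_apply' _ _ _).symm
    have e3 : C ((k : ℝ) * ((k : ℝ) - 1 + a)) * derivative (derivative^[k - 1] Q)
        = C ((k : ℝ) * ((k : ℝ) - 1 + a)) * derivative^[k] Q := by
      cases k with
      | zero => simp
      | succ m =>
        rw [show m + 1 - 1 = m from rfl,
          show derivative ((derivative)^[m] Q) = derivative^[m+1] Q from
            (Function.iterate_succ_apply' _ _ _).symm]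
    simp only [derivative_add, derivative_mul, derivative_one, derivative_X_pow,
      derivative_X, derivative_C, e1, e2]
    rw [e3]
    push_cast
    have c1 : C (2 * ((k : ℝ) + 1) + a) = C (2 * (k : ℝ) + a) + C 2 := by
      rw [← C_add]; congr 1; ring
    have c2 : C (((k : ℝ) + 1) * (((k : ℝ) + 1) - 1 + a))
        = C ((k : ℝ) * ((k : ℝ) - 1 + a)) + C (2 * (k : ℝ) + a) := by
      rw [← C_add]; congr 1; ring
    rw [c1, c2]
    ring

lemma mainLemma (a t : ℝ) : ∀ n h : ℕ,
    ((1 + X ^ 2) ^ h * derivative^[h] (polyQ a n)).eval t = wsum a t n h := by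
  intro n
  induction n with
  | zero =>
    intro h
    rw [wsum_zero]
    cases h with
    | zero => simp [polyQ]
    | succ k =>
      have : derivative^[k + 1] (polyQ a 0) = 0 := by
        rw [Function.iterate_succ_apply]
        simp [polyQ]
      simp [this]
  | succ n ih =>
    intro h
    rw [wsum_succ, ← ih, ← ih, ← ih]
    rw [show polyQ a (n + 1) = (1 + X ^ 2) * derivative (polyQ a n) + C a * X * polyQ a n
      from rfl]
    rw [keyLeibniz]
    cases h with
    | zero => simp
    | succ k =>
      simp only [eval_mul, eval_add, eval_pow, eval_one, eval_X, eval_C, Nat.add_sub_cancel]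
      push_cast
      ring

theorem stmt17 (n : ℕ) (a t : ℝ) :
    (polyQ a n).eval t = ∑ f : Fin n → MStep,
      if isMotzkinFrom (List.ofFn f) 0 then
        mweight (fun h => (2 * (h : ℝ) + a) * t)
          (fun h => (h : ℝ) * ((h : ℝ) - 1 + a) * (1 + t ^ 2)) (List.ofFn f) 0
      else 0 := by
  have h0 := mainLemma a t n 0
  simpa [wsum, pwT] using h0
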